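/- The centralizer C_H(H') of the derived subgroup H' in H equals the subgroup generated by c, a² and b, and this subgroup is abelian. -/

import Mathlib

namespace MIP

/-! ### A small concrete model group, used to show `c` has order 4 -/

structure G0 where
  i : ZMod 2
  j : ZMod 4
  k : ZMod 4
deriving DecidableEq

def g0mul (x y : G0) : G0 :=
  ⟨x.i + y.i, x.j + y.j, y.k + (if y.i = 1 then x.j - x.k else x.k)⟩

def g0inv (x : G0) : G0 := if x.i = 1 then ⟨1, -x.j, x.k - x.j⟩ else ⟨0, -x.j, -x.k⟩

instance : Mul G0 := ⟨g0mul⟩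
instance : One G0 := ⟨⟨0, 0, 0⟩⟩
instance : Inv G0 := ⟨g0inv⟩

lemma g0_mul_def (x y : G0) : x * y = g0mul x y := rfl
lemma g0_one_def : (1 : G0) = ⟨0, 0, 0⟩ := rfl
lemma g0_inv_def (x : G0) : x⁻¹ = g0inv x := rfl

private lemma zmod2cases : ∀ w : ZMod 2, w = 0 ∨ w = 1 := by decide
private lemma c11 : ¬((1 + 1 : ZMod 2) = 1) := by decide

set_option maxHeartbeats 1000000 in
instance : Group G0 where
  mul_assoc x y z := by
    obtain ⟨xi, xj, xk⟩ := x; obtain ⟨yi, yj, yk⟩ := y; obtain ⟨zi, zj, zk⟩ := z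
    rcases zmod2cases yi with hy | hy <;> rcases zmod2cases zi with hz | hz <;>
      subst hy <;> subst hz <;>
      simp only [g0_mul_def, g0mul, zero_add, add_zero, c11, if_true, ite_true, if_false,
        ite_false, zero_ne_one, one_ne_zero, G0.mk.injEq, if_pos rfl] <;>
      refine ⟨by simp [add_assoc], by ring, by ring⟩
  one_mul x := by
    obtain ⟨xi, xj, xk⟩ := x
    rcases zmod2cases xi with hx | hx <;> subst hx <;>
      simp only [g0_mul_def, g0mul, g0_one_def, zero_add, add_zero, if_true, ite_true,
        if_false, ite_false, zero_ne_one, one_ne_zero, G0.mk.injEq, if_pos rfl] <;>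
      refine ⟨by decide, by simp, by ring⟩
  mul_one x := by
    obtain ⟨xi, xj, xk⟩ := x
    simp only [g0_mul_def, g0mul, g0_one_def, zero_add, add_zero, zero_ne_one, if_false,
      ite_false, G0.mk.injEq]
  inv_mul_cancel x := by
    obtain ⟨xi, xj, xk⟩ := x
    rcases zmod2cases xi with hx | hx <;> subst hx <;>
      simp only [g0_mul_def, g0mul, g0_inv_def, g0inv, g0_one_def, zero_ne_one, one_ne_zero,
        if_false, ite_false, if_pos rfl, if_true, ite_true, c11, G0.mk.injEq] <;>
      refine ⟨by decide, by ring, by ring⟩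

def A : G0 := ⟨1, 0, 0⟩
def B : G0 := ⟨0, 1, 0⟩
def C : G0 := ⟨0, 0, 1⟩

/-! ### Statement-provided definitions -/

/-- Relators of the group `G`. -/
def grels (n m : ℕ) : Set (FreeGroup (Fin 3)) :=
  {(FreeGroup.of 2)⁻¹ * ((FreeGroup.of 1)⁻¹ * (FreeGroup.of 0)⁻¹ * FreeGroup.of 1 * FreeGroup.of 0),
   FreeGroup.of 0 ^ (2 ^ n), FreeGroup.of 1 ^ (2 ^ m), FreeGroup.of 2 ^ 4,
   (FreeGroup.of 0)⁻¹ * FreeGroup.of 2 * FreeGroup.of 0 * FreeGroup.of 2,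
   (FreeGroup.of 1)⁻¹ * FreeGroup.of 2 * FreeGroup.of 1 * FreeGroup.of 2}

/-- Relators of the group `H`. -/
def hrels (n m : ℕ) : Set (FreeGroup (Fin 3)) :=
  {(FreeGroup.of 2)⁻¹ * ((FreeGroup.of 1)⁻¹ * (FreeGroup.of 0)⁻¹ * FreeGroup.of 1 * FreeGroup.of 0),
   FreeGroup.of 0 ^ (2 ^ n), FreeGroup.of 1 ^ (2 ^ m), FreeGroup.of 2 ^ 4,
   (FreeGroup.of 0)⁻¹ * FreeGroup.of 2 * FreeGroup.of 0 * FreeGroup.of 2,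
   (FreeGroup.of 1)⁻¹ * FreeGroup.of 2 * FreeGroup.of 1 * (FreeGroup.of 2)⁻¹}

abbrev GG (n m : ℕ) := PresentedGroup (grels n m)
abbrev HH (n m : ℕ) := PresentedGroup (hrels n m)

def gx (n m : ℕ) : GG n m := PresentedGroup.of 0
def gy (n m : ℕ) : GG n m := PresentedGroup.of 1
def gz (n m : ℕ) : GG n m := PresentedGroup.of 2
def ha (n m : ℕ) : HH n m := PresentedGroup.of 0
def hb (n m : ℕ) : HH n m := PresentedGroup.of 1
def hc (n m : ℕ) : HH n m := PresentedGroup.of 2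

/-! ### Relations in `HH n m` -/

lemma hmk_rel {n m : ℕ} {r : FreeGroup (Fin 3)} (h : r ∈ hrels n m) :
    (PresentedGroup.mk (hrels n m) r : HH n m) = 1 :=
  (QuotientGroup.eq_one_iff r).mpr (Subgroup.subset_normalClosure h)

lemma rel_bab (n m : ℕ) : (hb n m)⁻¹ * (ha n m)⁻¹ * hb n m * ha n m = hc n m := by
  have h := hmk_rel (n := n) (m := m) (r := (FreeGroup.of 2)⁻¹ *
    ((FreeGroup.of 1)⁻¹ * (FreeGroup.of 0)⁻¹ * FreeGroup.of 1 * FreeGroup.of 0))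
    (by simp [hrels])
  simp only [map_mul, map_inv] at h
  have h2 : (hc n m)⁻¹ * ((hb n m)⁻¹ * (ha n m)⁻¹ * hb n m * ha n m) = 1 := h
  calc (hb n m)⁻¹ * (ha n m)⁻¹ * hb n m * ha n m
      = hc n m * ((hc n m)⁻¹ * ((hb n m)⁻¹ * (ha n m)⁻¹ * hb n m * ha n m)) := by group
    _ = hc n m := by rw [h2]; group

lemma rel_ca (n m : ℕ) : (ha n m)⁻¹ * hc n m * ha n m = (hc n m)⁻¹ := by
  have h := hmk_rel (n := n) (m := m) (r := (FreeGroup.of 0)⁻¹ * FreeGroup.of 2 *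
    FreeGroup.of 0 * FreeGroup.of 2) (by simp [hrels])
  simp only [map_mul, map_inv] at h
  have h2 : (ha n m)⁻¹ * hc n m * ha n m * hc n m = 1 := h
  calc (ha n m)⁻¹ * hc n m * ha n m
      = ((ha n m)⁻¹ * hc n m * ha n m * hc n m) * (hc n m)⁻¹ := by group
    _ = (hc n m)⁻¹ := by rw [h2]; group

lemma comm_cb (n m : ℕ) : hc n m * hb n m = hb n m * hc n m := by
  have h := hmk_rel (n := n) (m := m) (r := (FreeGroup.of 1)⁻¹ * FreeGroup.of 2 *
    FreeGroup.of 1 * (FreeGroup.of 2)⁻¹) (by simp [hrels])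
  simp only [map_mul, map_inv] at h
  have h2 : (hb n m)⁻¹ * hc n m * hb n m * (hc n m)⁻¹ = 1 := h
  calc hc n m * hb n m
      = hb n m * ((hb n m)⁻¹ * hc n m * hb n m * (hc n m)⁻¹) * hc n m := by group
    _ = hb n m * hc n m := by rw [h2]; group

section Derived

variable (n m : ℕ)

local notation "a" => ha n m
local notation "b" => hb n m
local notation "c" => hc n m

/-- `c * a = a * c⁻¹` -/
lemma h1 : c * a = a * c⁻¹ := by
  rw [← rel_ca]; group

/-- `c⁻¹ * a = a * c` -/
lemma h2 : c⁻¹ * a = a * c := by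
  have h' : (ha n m)⁻¹ * ((hc n m)⁻¹ * ha n m) = hc n m := by
    have h0 : ((ha n m)⁻¹ * hc n m * ha n m)⁻¹ = ((hc n m)⁻¹)⁻¹ := by rw [rel_ca]
    simpa [mul_inv_rev, inv_inv, mul_assoc] using h0
  conv_rhs => rw [← h']
  group

/-- `b * a = a * b * c` -/
lemma h3 : b * a = a * b * c := by
  rw [← rel_bab]; group

/-- `b * c * a = a * b` -/
lemma h5 : b * c * a = a * b := by
  rw [mul_assoc, h1, ← mul_assoc, h3]; group

/-- `c` commutes with `a ^ 2` -/
lemma comm_ca2 : c * a ^ 2 = a ^ 2 * c := by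
  calc c * a ^ 2 = (c * a) * a := by rw [pow_two]; group
    _ = a * (c⁻¹ * a) := by rw [h1]; group
    _ = a * (a * c) := by rw [h2]
    _ = a ^ 2 * c := by rw [pow_two]; group

/-- `a ^ 2` commutes with `b` -/
lemma comm_a2b : a ^ 2 * b = b * a ^ 2 := by
  have : b * (a * a) = a * a * b := by
    calc b * (a * a) = (b * a) * a := by group
      _ = (a * b * c) * a := by rw [h3]
      _ = a * b * (c * a) := by group
      _ = a * b * (a * c⁻¹) := by rw [h1]
      _ = a * ((b * a) * c⁻¹) := by group
      _ = a * ((a * b * c) * c⁻¹) := by rw [h3]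
      _ = a * a * b := by group
  rw [pow_two, this]

end Derived

/-! ### Generic helper lemmas -/

lemma closure_comm_of_comm {G : Type*} [Group G] {S : Set G}
    (h : ∀ x ∈ S, ∀ y ∈ S, Commute x y) :
    ∀ x ∈ Subgroup.closure S, ∀ y ∈ Subgroup.closure S, Commute x y := by
  have key : ∀ x ∈ S, ∀ y ∈ Subgroup.closure S, Commute x y := by
    intro x hx y hy
    induction hy using Subgroup.closure_induction with
    | mem z hz => exact h x hx z hz
    | one => exact Commute.one_right x
    | mul u v hu hv hcu hcv => exact hcu.mul_right hcv
    | inv u hu hcu => exact hcu.inv_right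
  intro x hx y hy
  induction hx using Subgroup.closure_induction with
  | mem z hz => exact key z hz y hy
  | one => exact Commute.one_left y
  | mul u v hu hv hcu hcv => exact hcu.mul_left hcv
  | inv u hu hcu => exact hcu.inv_left

lemma conj_mem_closure {G : Type*} [Group G] {S : Set G} {g : G}
    (h : ∀ x ∈ S, g * x * g⁻¹ ∈ Subgroup.closure S) :
    ∀ x ∈ Subgroup.closure S, g * x * g⁻¹ ∈ Subgroup.closure S := by
  intro x hx
  induction hx using Subgroup.closure_induction with
  | mem z hz => exact h z hz
  | one => simpa using Subgroup.one_mem _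
  | mul u v hu hv hcu hcv =>
      have e : g * (u * v) * g⁻¹ = (g * u * g⁻¹) * (g * v * g⁻¹) := by group
      rw [e]; exact Subgroup.mul_mem _ hcu hcv
  | inv u hu hcu =>
      have e : g * u⁻¹ * g⁻¹ = (g * u * g⁻¹)⁻¹ := by group
      rw [e]; exact Subgroup.inv_mem _ hcu

lemma conj_eq_of_comm {G : Type*} [Group G] {g x : G} (h : g * x = x * g) :
    g * x * g⁻¹ = x := by rw [h]; group

lemma conj_inv_eq_of_comm {G : Type*} [Group G] {g x : G} (h : g * x = x * g) :
    g⁻¹ * x * g = x := by rw [mul_assoc, ← h]; group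

/-! ### The generators generate -/

lemma htop (n m : ℕ) : ∀ g : HH n m,
    g ∈ Subgroup.closure ({ha n m, hb n m, hc n m} : Set (HH n m)) := by
  have hle : (⊤ : Subgroup (HH n m)) ≤ Subgroup.closure {ha n m, hb n m, hc n m} := by
    rw [← PresentedGroup.closure_range_of (hrels n m)]
    apply (Subgroup.closure_le _).mpr
    rintro x ⟨i, rfl⟩
    fin_cases i
    · exact Subgroup.subset_closure (by left; rfl)
    · exact Subgroup.subset_closure (by right; left; rfl)
    · exact Subgroup.subset_closure (by right; right; rfl)
  exact fun g => hle trivial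

/-! ### `c ^ 2 ≠ 1` via the concrete model -/

lemma model_rels (n m : ℕ) (hn : 1 ≤ n) (hm : 2 ≤ m) :
    ∀ r ∈ hrels n m, FreeGroup.lift (![A, B, C] : Fin 3 → G0) r = 1 := by
  intro r hr
  simp only [hrels, Set.mem_insert_iff, Set.mem_singleton_iff] at hr
  rcases hr with rfl | rfl | rfl | rfl | rfl | rfl
  · simp only [map_mul, map_inv, FreeGroup.lift_apply_of]
    show (![A, B, C] 2)⁻¹ * ((![A, B, C] 1)⁻¹ * (![A, B, C] 0)⁻¹ * ![A, B, C] 1 * ![A, B, C] 0) = 1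
    decide
  · rw [map_pow, FreeGroup.lift_apply_of]
    show (![A, B, C] 0) ^ 2 ^ n = 1
    have h2n : 2 ^ n = 2 * 2 ^ (n - 1) := by
      conv_lhs => rw [show n = 1 + (n - 1) by omega]
      rw [pow_add, pow_one]
    rw [h2n, pow_mul, show (![A, B, C] 0) ^ 2 = 1 by decide, one_pow]
  · rw [map_pow, FreeGroup.lift_apply_of]
    show (![A, B, C] 1) ^ 2 ^ m = 1
    have h2m : 2 ^ m = 4 * 2 ^ (m - 2) := by
      conv_lhs => rw [show m = 2 + (m - 2) by omega]
      rw [pow_add]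
      norm_num
    rw [h2m, pow_mul, show (![A, B, C] 1) ^ 4 = 1 by decide, one_pow]
  · rw [map_pow, FreeGroup.lift_apply_of]
    show (![A, B, C] 2) ^ 4 = 1
    decide
  · simp only [map_mul, map_inv, FreeGroup.lift_apply_of]
    show (![A, B, C] 0)⁻¹ * ![A, B, C] 2 * ![A, B, C] 0 * ![A, B, C] 2 = 1
    decide
  · simp only [map_mul, map_inv, FreeGroup.lift_apply_of]
    show (![A, B, C] 1)⁻¹ * ![A, B, C] 2 * ![A, B, C] 1 * (![A, B, C] 2)⁻¹ = 1
    decide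

lemma hc_sq_ne (n m : ℕ) (hn : 1 ≤ n) (hm : 2 ≤ m) : (hc n m) ^ 2 ≠ 1 := by
  intro h
  have h2 := congrArg (PresentedGroup.toGroup (model_rels n m hn hm)) h
  rw [map_pow, map_one] at h2
  have h3 : PresentedGroup.toGroup (model_rels n m hn hm) (hc n m) = C :=
    PresentedGroup.toGroup.of (model_rels n m hn hm)
  rw [h3] at h2
  exact (by decide : C ^ 2 ≠ 1) h2

/-! ### Conjugates of `c`, normality of `⟨c⟩`, and the derived subgroup -/

lemma conj_c (n m : ℕ) : ∀ g : HH n m,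
    (g * hc n m * g⁻¹ = hc n m ∨ g * hc n m * g⁻¹ = (hc n m)⁻¹) ∧
    (g⁻¹ * hc n m * g = hc n m ∨ g⁻¹ * hc n m * g = (hc n m)⁻¹) := by
  intro g
  have hg := htop n m g
  induction hg using Subgroup.closure_induction with
  | mem x hx =>
      rcases hx with rfl | rfl | rfl
      · constructor
        · right
          rw [← h2]; group
        · right; exact rel_ca n m
      · exact ⟨Or.inl (conj_eq_of_comm (comm_cb n m).symm),
          Or.inl (conj_inv_eq_of_comm (comm_cb n m).symm)⟩
      · constructor <;> left <;> group
  | one => constructor <;> left <;> group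
  | mul x y hx hy ihx ihy =>
      obtain ⟨ihx1, ihx2⟩ := ihx
      obtain ⟨ihy1, ihy2⟩ := ihy
      constructor
      · have e : (x * y) * hc n m * (x * y)⁻¹ = x * (y * hc n m * y⁻¹) * x⁻¹ := by group
        rw [e]
        rcases ihy1 with h | h <;> rw [h]
        · exact ihx1
        · have e2 : x * (hc n m)⁻¹ * x⁻¹ = (x * hc n m * x⁻¹)⁻¹ := by group
          rw [e2]
          rcases ihx1 with h' | h' <;> rw [h']
          · right; rfl
          · left; exact inv_inv _
      · have e : (x * y)⁻¹ * hc n m * (x * y) = y⁻¹ * (x⁻¹ * hc n m * x) * y := by group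
        rw [e]
        rcases ihx2 with h | h <;> rw [h]
        · exact ihy2
        · have e2 : y⁻¹ * (hc n m)⁻¹ * y = (y⁻¹ * hc n m * y)⁻¹ := by group
          rw [e2]
          rcases ihy2 with h' | h' <;> rw [h']
          · right; rfl
          · left; exact inv_inv _
  | inv x hx ihx =>
      simp only [inv_inv]
      exact ⟨ihx.2, ihx.1⟩

lemma zpowers_c_normal (n m : ℕ) : (Subgroup.zpowers (hc n m)).Normal := by
  constructor
  intro x hx g
  obtain ⟨t, rfl⟩ := Subgroup.mem_zpowers_iff.mp hx
  have e : g * (hc n m) ^ t * g⁻¹ = (g * hc n m * g⁻¹) ^ t := by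
    simpa [MulAut.conj_apply] using map_zpow (MulAut.conj g) (hc n m) t
  rcases (conj_c n m g).1 with h | h
  · rw [e, h]; exact Subgroup.zpow_mem _ (Subgroup.mem_zpowers _) t
  · rw [e, h]; exact Subgroup.zpow_mem _ (Subgroup.inv_mem _ (Subgroup.mem_zpowers _)) t

open scoped commutatorElement in
lemma commutator_le_zpowers (n m : ℕ) :
    commutator (HH n m) ≤ Subgroup.zpowers (hc n m) := by
  haveI := zpowers_c_normal n m
  set N := Subgroup.zpowers (hc n m) with hN
  let π : HH n m →* HH n m ⧸ N := QuotientGroup.mk' N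
  have hπc : π (hc n m) = 1 := (QuotientGroup.eq_one_iff _).mpr (Subgroup.mem_zpowers _)
  have hcommab : Commute (π (ha n m)) (π (hb n m)) := by
    have e : (π (hb n m))⁻¹ * (π (ha n m))⁻¹ * π (hb n m) * π (ha n m) = 1 := by
      have h := congrArg π (rel_bab n m)
      simp only [map_mul, map_inv] at h
      rw [h, hπc]
    have e2 : ⁅(π (hb n m))⁻¹, (π (ha n m))⁻¹⁆ = 1 := by
      rw [commutatorElement_def, inv_inv, inv_inv]; exact e
    have h3 := commutatorElement_eq_one_iff_commute.mp e2
    exact (Commute.inv_left_iff.mp (Commute.inv_right_iff.mp h3)).symm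
  have hQ : ∀ q : HH n m ⧸ N,
      q ∈ Subgroup.closure {π (ha n m), π (hb n m), π (hc n m)} := by
    intro q
    obtain ⟨g, rfl⟩ := QuotientGroup.mk'_surjective N q
    have h1 : (QuotientGroup.mk' N) g ∈ (Subgroup.closure {ha n m, hb n m, hc n m}).map π :=
      Subgroup.mem_map_of_mem π (htop n m g)
    rw [MonoidHom.map_closure] at h1
    simpa [Set.image_insert_eq, Set.image_singleton] using h1
  have hpair : ∀ x ∈ ({π (ha n m), π (hb n m), π (hc n m)} : Set _),
      ∀ y ∈ ({π (ha n m), π (hb n m), π (hc n m)} : Set _), Commute x y := by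
    rintro x (rfl | rfl | rfl) y (rfl | rfl | rfl) <;>
      first
        | exact Commute.refl _
        | exact hcommab
        | exact hcommab.symm
        | (rw [hπc]; first | exact Commute.one_right _ | exact Commute.one_left _)
  rw [commutator_def, Subgroup.commutator_le]
  intro g _ h _
  have hcgh : Commute (π g) (π h) := closure_comm_of_comm hpair _ (hQ _) _ (hQ _)
  have hone : π ⁅g, h⁆ = 1 := by
    rw [map_commutatorElement]
    exact commutatorElement_eq_one_iff_commute.mpr hcgh
  exact (QuotientGroup.eq_one_iff _).mp hone

open scoped commutatorElement in
lemma hc_mem_commutator (n m : ℕ) : hc n m ∈ commutator (HH n m) := by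
  have e : hc n m = ⁅(hb n m)⁻¹, (ha n m)⁻¹⁆ := by
    rw [commutatorElement_def, inv_inv, inv_inv, rel_bab]
  rw [commutator_def, e]
  exact Subgroup.commutator_mem_commutator (Subgroup.mem_top _) (Subgroup.mem_top _)

/-! ### The subgroup `K = ⟨c, a², b⟩` -/

lemma conj_mem_closure' {G : Type*} [Group G] {S : Set G} {g : G}
    (h : ∀ x ∈ S, g⁻¹ * x * g ∈ Subgroup.closure S) :
    ∀ x ∈ Subgroup.closure S, g⁻¹ * x * g ∈ Subgroup.closure S := by
  intro x hx
  have h2 := conj_mem_closure (g := g⁻¹) (by simpa [inv_inv] using h) x hx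
  simpa [inv_inv] using h2

lemma K_pairwise (n m : ℕ) :
    ∀ x ∈ ({hc n m, ha n m ^ 2, hb n m} : Set (HH n m)),
    ∀ y ∈ ({hc n m, ha n m ^ 2, hb n m} : Set (HH n m)), Commute x y := by
  rintro x (rfl | rfl | rfl) y (rfl | rfl | rfl)
  · exact Commute.refl _
  · exact comm_ca2 n m
  · exact comm_cb n m
  · exact (comm_ca2 n m).symm
  · exact Commute.refl _
  · exact comm_a2b n m
  · exact (comm_cb n m).symm
  · exact (comm_a2b n m).symm
  · exact Commute.refl _

lemma K_normal (n m : ℕ) :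
    (Subgroup.closure ({hc n m, ha n m ^ 2, hb n m} : Set (HH n m))).Normal := by
  have hcK : hc n m ∈ Subgroup.closure ({hc n m, ha n m ^ 2, hb n m} : Set (HH n m)) :=
    Subgroup.subset_closure (by left; rfl)
  have ha2K : ha n m ^ 2 ∈ Subgroup.closure ({hc n m, ha n m ^ 2, hb n m} : Set (HH n m)) :=
    Subgroup.subset_closure (by right; left; rfl)
  have hbK : hb n m ∈ Subgroup.closure ({hc n m, ha n m ^ 2, hb n m} : Set (HH n m)) :=
    Subgroup.subset_closure (by right; right; rfl)
  have main : ∀ g : HH n m,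
      (∀ x ∈ Subgroup.closure ({hc n m, ha n m ^ 2, hb n m} : Set (HH n m)),
        g * x * g⁻¹ ∈ Subgroup.closure ({hc n m, ha n m ^ 2, hb n m} : Set (HH n m))) ∧
      (∀ x ∈ Subgroup.closure ({hc n m, ha n m ^ 2, hb n m} : Set (HH n m)),
        g⁻¹ * x * g ∈ Subgroup.closure ({hc n m, ha n m ^ 2, hb n m} : Set (HH n m))) := by
    intro g
    have hg := htop n m g
    induction hg using Subgroup.closure_induction with
    | mem z hz =>
        rcases hz with rfl | rfl | rfl
        · constructor
          · apply conj_mem_closure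
            rintro x (rfl | rfl | rfl)
            · rw [show ha n m * hc n m * (ha n m)⁻¹ = (hc n m)⁻¹ from by rw [← h2]; group]
              exact Subgroup.inv_mem _ hcK
            · rw [show ha n m * ha n m ^ 2 * (ha n m)⁻¹ = ha n m ^ 2 from by group]
              exact ha2K
            · rw [show ha n m * hb n m * (ha n m)⁻¹ = hb n m * hc n m from by
                rw [← h5]; group]
              exact Subgroup.mul_mem _ hbK hcK
          · apply conj_mem_closure'
            rintro x (rfl | rfl | rfl)
            · rw [show (ha n m)⁻¹ * hc n m * ha n m = (hc n m)⁻¹ from rel_ca n m]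
              exact Subgroup.inv_mem _ hcK
            · rw [show (ha n m)⁻¹ * ha n m ^ 2 * ha n m = ha n m ^ 2 from by group]
              exact ha2K
            · rw [show (ha n m)⁻¹ * hb n m * ha n m = hb n m * hc n m from by
                rw [mul_assoc, h3]; group]
              exact Subgroup.mul_mem _ hbK hcK
        · constructor
          · apply conj_mem_closure
            rintro x (rfl | rfl | rfl)
            · rw [conj_eq_of_comm (comm_cb n m).symm]; exact hcK
            · rw [conj_eq_of_comm (comm_a2b n m).symm]; exact ha2K
            · rw [show hb n m * hb n m * (hb n m)⁻¹ = hb n m from by group]; exact hbK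
          · apply conj_mem_closure'
            rintro x (rfl | rfl | rfl)
            · rw [conj_inv_eq_of_comm (comm_cb n m).symm]; exact hcK
            · rw [conj_inv_eq_of_comm (comm_a2b n m).symm]; exact ha2K
            · rw [show (hb n m)⁻¹ * hb n m * hb n m = hb n m from by group]; exact hbK
        · constructor
          · apply conj_mem_closure
            rintro x (rfl | rfl | rfl)
            · rw [show hc n m * hc n m * (hc n m)⁻¹ = hc n m from by group]; exact hcK
            · rw [conj_eq_of_comm (comm_ca2 n m)]; exact ha2K
            · rw [conj_eq_of_comm (comm_cb n m)]; exact hbK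
          · apply conj_mem_closure'
            rintro x (rfl | rfl | rfl)
            · rw [show (hc n m)⁻¹ * hc n m * hc n m = hc n m from by group]; exact hcK
            · rw [conj_inv_eq_of_comm (comm_ca2 n m)]; exact ha2K
            · rw [conj_inv_eq_of_comm (comm_cb n m)]; exact hbK
    | one =>
        constructor <;> intro x hx <;>
          simpa using hx
    | mul x y hx hy ihx ihy =>
        obtain ⟨ihx1, ihx2⟩ := ihx
        obtain ⟨ihy1, ihy2⟩ := ihy
        constructor
        · intro z hz
          have e : (x * y) * z * (x * y)⁻¹ = x * (y * z * y⁻¹) * x⁻¹ := by group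
          rw [e]; exact ihx1 _ (ihy1 z hz)
        · intro z hz
          have e : (x * y)⁻¹ * z * (x * y) = y⁻¹ * (x⁻¹ * z * x) * y := by group
          rw [e]; exact ihy2 _ (ihx2 z hz)
    | inv x hx ihx =>
        simp only [inv_inv]
        exact ⟨ihx.2, ihx.1⟩
  constructor
  intro x hx g
  exact (main g).1 x hx

/-! ### Main statement -/

/-- The centralizer `C_H(H')` of the derived subgroup `H'` in `H` equals
the subgroup generated by `c`, `a²` and `b`, and this subgroup is abelian. -/
theorem statement_7 (n m : ℕ) (hm : 2 < m) (hmn : m < n) :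
    Subgroup.centralizer (commutator (HH n m) : Set (HH n m)) =
      Subgroup.closure {hc n m, ha n m ^ 2, hb n m} ∧
    IsMulCommutative (Subgroup.closure {hc n m, ha n m ^ 2, hb n m}) := by
  have hn1 : 1 ≤ n := by omega
  have hm2 : 2 ≤ m := by omega
  have hKcomm := closure_comm_of_comm (K_pairwise n m)
  have hcK : hc n m ∈ Subgroup.closure ({hc n m, ha n m ^ 2, hb n m} : Set (HH n m)) :=
    Subgroup.subset_closure (by left; rfl)
  constructor
  · apply le_antisymm
    · -- centralizer ≤ K
      intro x hx
      haveI := K_normal n m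
      have hπb : (QuotientGroup.mk' (Subgroup.closure
          ({hc n m, ha n m ^ 2, hb n m} : Set (HH n m)))) (hb n m) = 1 :=
        (QuotientGroup.eq_one_iff _).mpr (Subgroup.subset_closure (by right; right; rfl))
      have hπc : (QuotientGroup.mk' (Subgroup.closure
          ({hc n m, ha n m ^ 2, hb n m} : Set (HH n m)))) (hc n m) = 1 :=
        (QuotientGroup.eq_one_iff _).mpr hcK
      have hπa2 : (QuotientGroup.mk' (Subgroup.closure
          ({hc n m, ha n m ^ 2, hb n m} : Set (HH n m)))) (ha n m) ^ 2 = 1 := by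
        have h0 : (QuotientGroup.mk' (Subgroup.closure
            ({hc n m, ha n m ^ 2, hb n m} : Set (HH n m)))) (ha n m ^ 2) = 1 :=
          (QuotientGroup.eq_one_iff _).mpr (Subgroup.subset_closure (by right; left; rfl))
        simpa [map_pow] using h0
      set π := QuotientGroup.mk' (Subgroup.closure
          ({hc n m, ha n m ^ 2, hb n m} : Set (HH n m))) with hπ
      have hQ' : ∀ q ∈ Subgroup.closure {π (ha n m), π (hb n m), π (hc n m)},
          ∃ z : ℤ, q = (π (ha n m)) ^ z := by
        intro q hq
        induction hq using Subgroup.closure_induction with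
        | mem z hz =>
            rcases hz with rfl | rfl | rfl
            · exact ⟨1, by rw [zpow_one]⟩
            · exact ⟨0, by rw [hπb, zpow_zero]⟩
            · exact ⟨0, by rw [hπc, zpow_zero]⟩
        | one => exact ⟨0, by rw [zpow_zero]⟩
        | mul u v hu hv ihu ihv =>
            obtain ⟨z1, rfl⟩ := ihu
            obtain ⟨z2, rfl⟩ := ihv
            exact ⟨z1 + z2, by rw [zpow_add]⟩
        | inv u hu ihu =>
            obtain ⟨z1, rfl⟩ := ihu
            exact ⟨-z1, by rw [zpow_neg]⟩
      have hQ : ∀ q : HH n m ⧸ Subgroup.closure ({hc n m, ha n m ^ 2, hb n m} : Set (HH n m)),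
          ∃ z : ℤ, q = (π (ha n m)) ^ z := by
        intro q
        obtain ⟨g, rfl⟩ := QuotientGroup.mk'_surjective _ q
        have h1 : π g ∈ (Subgroup.closure {ha n m, hb n m, hc n m}).map π :=
          Subgroup.mem_map_of_mem π (htop n m g)
        rw [MonoidHom.map_closure] at h1
        exact hQ' (π g) (by simpa [Set.image_insert_eq, Set.image_singleton] using h1)
      obtain ⟨z, hz⟩ := hQ (π x)
      have hπa2' : (π (ha n m)) ^ (2 : ℤ) = 1 := by
        rw [show ((2 : ℤ)) = ((2 : ℕ) : ℤ) from by norm_num, zpow_natCast, hπa2]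
      have hz2 : π x = (π (ha n m)) ^ (z % 2) := by
        conv_lhs => rw [hz, show z = 2 * (z / 2) + z % 2 from (Int.mul_ediv_add_emod z 2).symm]
        rw [zpow_add, zpow_mul, hπa2', one_zpow, one_mul]
      rcases Int.emod_two_eq z with h0 | h0 <;> rw [h0] at hz2
      · have hone : π x = 1 := by rw [hz2, zpow_zero]
        exact (QuotientGroup.eq_one_iff _).mp hone
      · exfalso
        have hk : (ha n m)⁻¹ * x ∈ Subgroup.closure
            ({hc n m, ha n m ^ 2, hb n m} : Set (HH n m)) := by
          have hone : π ((ha n m)⁻¹ * x) = 1 := by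
            rw [map_mul, map_inv, hz2, zpow_one, inv_mul_cancel]
          exact (QuotientGroup.eq_one_iff _).mp hone
        have hxak : x = ha n m * ((ha n m)⁻¹ * x) := by group
        have hxc : hc n m * x = x * hc n m :=
          Subgroup.mem_centralizer_iff.mp hx (hc n m) (hc_mem_commutator n m)
        have hkc : hc n m * ((ha n m)⁻¹ * x) = ((ha n m)⁻¹ * x) * hc n m :=
          ((hKcomm _ hk _ hcK).symm).eq
        have hca : hc n m * ha n m = ha n m * hc n m := by
          apply mul_right_cancel (b := (ha n m)⁻¹ * x)
          calc hc n m * ha n m * ((ha n m)⁻¹ * x)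
              = hc n m * (ha n m * ((ha n m)⁻¹ * x)) := by group
            _ = hc n m * x := by rw [← hxak]
            _ = x * hc n m := hxc
            _ = (ha n m * ((ha n m)⁻¹ * x)) * hc n m := by rw [← hxak]
            _ = ha n m * (((ha n m)⁻¹ * x) * hc n m) := by group
            _ = ha n m * (hc n m * ((ha n m)⁻¹ * x)) := by rw [← hkc]
            _ = ha n m * hc n m * ((ha n m)⁻¹ * x) := by group
        have hcc : hc n m = (hc n m)⁻¹ := by
          have e := h1 n m
          rw [hca] at e
          exact mul_left_cancel e
        have hsq : hc n m ^ 2 = 1 := by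
          rw [pow_two]
          nth_rewrite 1 [hcc]
          rw [inv_mul_cancel]
        exact hc_sq_ne n m hn1 hm2 hsq
    · -- K ≤ centralizer
      intro x hx
      apply Subgroup.mem_centralizer_iff.mpr
      intro g hg
      obtain ⟨t, rfl⟩ := Subgroup.mem_zpowers_iff.mp (commutator_le_zpowers n m hg)
      have hxc : Commute x (hc n m) := hKcomm _ hx _ hcK
      exact ((hxc.zpow_right t).symm).eq
  · exact ⟨⟨fun x y => Subtype.ext ((hKcomm _ x.2 _ y.2).eq)⟩⟩

end MIP
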